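/- Let m ∈ {1, −1}, let ξ ∈ ℂ with ξ ≠ 0, and let γ ∈ ℂ with γ² ≠ |ξ|². Then the 2×2 matrix γ·I₂ + ξ·σ is invertible and (γ·I₂ + ξ·σ)⁻¹ · B_m = −(|ξ|/(|ξ|² − γ²)) · ((γ/|ξ|)·B_m − ξ̂_m·Λ_m), where Λ_m := Λ₁ if m = 1 and Λ_m := Λ₋₁ if m = −1. -/

import Mathlib

open Matrix Complex
open scoped Kronecker

noncomputable section

def σ1 : Matrix (Fin 2) (Fin 2) ℂ := !![0, 1; 1, 0]
def σ2 : Matrix (Fin 2) (Fin 2) ℂ := !![0, -Complex.I; Complex.I, 0]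
def σ3 : Matrix (Fin 2) (Fin 2) ℂ := !![1, 0; 0, -1]

/-- `ξ·σ = ξ₁σ₁ + ξ₂σ₂ = !![0, conj ξ; ξ, 0]`. -/
def xiSigma (ξ : ℂ) : Matrix (Fin 2) (Fin 2) ℂ := !![0, (starRingEnd ℂ) ξ; ξ, 0]

def Bm (m : ℝ) : Matrix (Fin 2) (Fin 2) ℂ :=
  (((1 + m) / 2 : ℝ) : ℂ) • !![0, 1; 0, 0] + (((1 - m) / 2 : ℝ) : ℂ) • !![0, 0; 1, 0]

/-- The 2×2 block of the bulk replica Hamiltonian at block position `(k, k')`. -/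
def replicaBlock (ξ : ℂ) (m ε : ℝ) (k k' : ℤ) : Matrix (Fin 2) (Fin 2) ℂ :=
  if k' = k then (k : ℂ) • (1 : Matrix (Fin 2) (Fin 2) ℂ) + xiSigma ξ
  else if k' = k - 1 then (ε : ℂ) • Bm m
  else if k' = k + 1 then (ε : ℂ) • (Bm m)ᴴ
  else 0

/-- The bulk replica Hamiltonian `Ĥ_n(ξ)`, block tridiagonal with blocks indexed by
`k, k' ∈ {-n, …, n}` (here realized by `Fin (2n+1)` via `k = j - n`). -/
def Hrep (n : ℕ) (ξ : ℂ) (m ε : ℝ) :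
    Matrix (Fin (2 * n + 1) × Fin 2) (Fin (2 * n + 1) × Fin 2) ℂ :=
  fun p q => replicaBlock ξ m ε ((p.1 : ℤ) - n) ((q.1 : ℤ) - n) p.2 q.2

def Λ1 : Matrix (Fin 2) (Fin 2) ℂ := !![0, 0; 0, 1]
def Λm1 : Matrix (Fin 2) (Fin 2) ℂ := !![1, 0; 0, 0]

/-- `Λ_m`: `Λ₁` if `m = 1`, `Λ₋₁` if `m = -1`. -/
def Lam (m : ℝ) : Matrix (Fin 2) (Fin 2) ℂ := if m = 1 then Λ1 else Λm1

/-- `ξ_m`: `ξ` if `m = 1`, `conj ξ` if `m = -1`. -/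
def xiM (m : ℝ) (ξ : ℂ) : ℂ := if m = 1 then ξ else (starRingEnd ℂ) ξ

/-- `(γ·I₂ + ξ·σ)` is invertible and
`(γ·I₂ + ξ·σ)⁻¹ B_m = -(|ξ|/(|ξ|²-γ²)) ((γ/|ξ|) B_m - ξ̂_m Λ_m)`. -/
theorem resolvent_Bm (m : ℝ) (hm : m = 1 ∨ m = -1) (ξ : ℂ) (hξ : ξ ≠ 0) (γ : ℂ)
    (hγ : γ ^ 2 ≠ ((‖ξ‖ : ℂ)) ^ 2) :
    IsUnit (γ • (1 : Matrix (Fin 2) (Fin 2) ℂ) + xiSigma ξ) ∧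
    (γ • (1 : Matrix (Fin 2) (Fin 2) ℂ) + xiSigma ξ)⁻¹ * Bm m
      = -(((‖ξ‖ : ℂ) / ((‖ξ‖ : ℂ) ^ 2 - γ ^ 2)) •
          ((γ / (‖ξ‖ : ℂ)) • Bm m - (xiM m ξ / (‖ξ‖ : ℂ)) • Lam m)) := by

  have habs : (‖ξ‖ : ℂ) ≠ 0 := by
    simp [hξ]
  have hA : (γ • (1 : Matrix (Fin 2) (Fin 2) ℂ) + xiSigma ξ) = !![γ, (starRingEnd ℂ) ξ; ξ, γ] := by
    simp [xiSigma]
    ext i j; fin_cases i <;> fin_cases j <;> simp [Matrix.one_apply]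
  have hmc : ξ * (starRingEnd ℂ) ξ = (‖ξ‖ : ℂ) ^ 2 := by
    rw [Complex.mul_conj]; norm_cast; rw [Complex.normSq_eq_norm_sq]
  have hdet : (γ • (1 : Matrix (Fin 2) (Fin 2) ℂ) + xiSigma ξ).det = γ ^ 2 - (‖ξ‖ : ℂ) ^ 2 := by
    rw [hA, Matrix.det_fin_two_of]; linear_combination -hmc
  have hd : (γ • (1 : Matrix (Fin 2) (Fin 2) ℂ) + xiSigma ξ).det ≠ 0 := by
    rw [hdet]; exact sub_ne_zero_of_ne hγ
  have hU : IsUnit (γ • (1 : Matrix (Fin 2) (Fin 2) ℂ) + xiSigma ξ) := by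
    rw [Matrix.isUnit_iff_isUnit_det]; exact hd.isUnit
  refine ⟨hU, ?_⟩
  have key : (γ • (1 : Matrix (Fin 2) (Fin 2) ℂ) + xiSigma ξ) *
      (-(((‖ξ‖ : ℂ) / ((‖ξ‖ : ℂ) ^ 2 - γ ^ 2)) •
        ((γ / (‖ξ‖ : ℂ)) • Bm m - (xiM m ξ / (‖ξ‖ : ℂ)) • Lam m))) = Bm m := by
    have hsub : ((‖ξ‖ : ℂ) ^ 2 - γ ^ 2) ≠ 0 := by
      intro h; exact hγ (by linear_combination -h)
    rw [hA]
    rcases hm with hm | hm <;>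
      subst hm <;>
      simp only [Bm, Lam, xiM, Λ1, Λm1] <;>
      ext i j <;>
      norm_num <;>
      fin_cases i <;> fin_cases j <;>
      · have hconj : (starRingEnd ℂ) ξ = (‖ξ‖ : ℂ) ^ 2 / ξ := by
          field_simp; linear_combination hmc
        simp [Matrix.mul_apply, Fin.sum_univ_two, hconj]
        try field_simp
        try ring
  calc (γ • (1 : Matrix (Fin 2) (Fin 2) ℂ) + xiSigma ξ)⁻¹ * Bm m
      = (γ • (1 : Matrix (Fin 2) (Fin 2) ℂ) + xiSigma ξ)⁻¹ *
        ((γ • (1 : Matrix (Fin 2) (Fin 2) ℂ) + xiSigma ξ) *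
        (-(((‖ξ‖ : ℂ) / ((‖ξ‖ : ℂ) ^ 2 - γ ^ 2)) •
          ((γ / (‖ξ‖ : ℂ)) • Bm m - (xiM m ξ / (‖ξ‖ : ℂ)) • Lam m)))) := by rw [key]
    _ = _ := by rw [← Matrix.mul_assoc, Matrix.nonsing_inv_mul _ hd.isUnit, Matrix.one_mul]
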